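/- For all indices i, j with 0 ≤ i < j ≤ n−1, the length of the longest common prefix of the suffixes S_{SUF[i]} and S_{SUF[j]} equals the minimum of LCP[l] over all l with i+1 ≤ l ≤ j, i.e. lcp(S_{SUF[i]}, S_{SUF[j]}) = min{ LCP[l] : i+1 ≤ l ≤ j }. -/

import Mathlib

/-- Length of the longest common prefix of two lists. -/
def lcpLen {α : Type*} [DecidableEq α] : List α → List α → ℕ
  | a :: u, b :: v => if a = b then lcpLen u v + 1 else 0
  | _, _ => 0

/-- The suffix of `S` starting at position `i` (as a list). -/
def sfx {α : Type*} {n : ℕ} (S : Fin n → α) (i : ℕ) : List α :=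
  (List.ofFn S).drop i

lemma lcp3 {α : Type*} [LinearOrder α] :
    ∀ (u v w : List α), List.Lex (· < ·) u v → List.Lex (· < ·) v w →
      lcpLen u w = min (lcpLen u v) (lcpLen v w) := by
  intro u
  induction u with
  | nil => intro v w _ _; cases v <;> cases w <;> simp [lcpLen]
  | cons a u ih =>
    intro v w huv hvw
    cases v with
    | nil => cases huv
    | cons b v =>
      cases w with
      | nil => cases hvw
      | cons c w =>
        cases huv with
        | cons huv' =>
          cases hvw with
          | cons hvw' =>
            simp [lcpLen, ih v w huv' hvw']
          | rel h =>
            simp [lcpLen, h.ne, (h.ne : ¬ _)]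
        | rel h =>
          cases hvw with
          | cons hvw' => simp [lcpLen, h.ne]
          | rel h2 => simp [lcpLen, h.ne, (h.trans h2).ne]

lemma inf'_proof_irrel {s t : Finset ℕ} (hs : s.Nonempty) (ht : t.Nonempty)
    (hst : s = t) (f : ℕ → ℕ) : s.inf' hs f = t.inf' ht f := by
  subst hst; rfl

lemma lcp_aux {α : Type*} [LinearOrder α] {n : ℕ} (S : Fin n → α)
    (SUF : Equiv.Perm (Fin n))
    (hSUF : ∀ i j : Fin n, i < j →
      List.Lex (· < ·) (sfx S ((SUF i : Fin n) : ℕ)) (sfx S ((SUF j : Fin n) : ℕ)))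
    (LCP : ℕ → ℕ)
    (hLCP : ∀ l, ∀ _ : 1 ≤ l, ∀ h2 : l < n,
      LCP l = lcpLen (sfx S ((SUF ⟨l - 1, Nat.lt_of_le_of_lt (Nat.sub_le l 1) h2⟩ : Fin n) : ℕ))
                     (sfx S ((SUF ⟨l, h2⟩ : Fin n) : ℕ))) :
    ∀ j i (hi : i < n) (hj : j < n) (hij : i < j),
      lcpLen (sfx S ((SUF ⟨i, hi⟩ : Fin n) : ℕ)) (sfx S ((SUF ⟨j, hj⟩ : Fin n) : ℕ))
        = (Finset.Icc (i + 1) j).inf' (Finset.nonempty_Icc.mpr hij) LCP := by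
  intro j
  induction j with
  | zero => intro i hi hj hij; omega
  | succ m ih =>
    intro i hi hm1 him
    have hL : LCP (m + 1) = lcpLen (sfx S ((SUF ⟨m, by omega⟩ : Fin n) : ℕ))
        (sfx S ((SUF ⟨m + 1, hm1⟩ : Fin n) : ℕ)) := hLCP (m + 1) (by omega) hm1
    by_cases hcase : i = m
    · subst hcase
      rw [inf'_proof_irrel _ (Finset.singleton_nonempty (i + 1)) (Finset.Icc_self _) LCP,
        Finset.inf'_singleton, hL]
    · have him' : i < m := by omega
      have hmn : m < n := by omega
      have step := lcp3 _ _ _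
        (hSUF ⟨i, hi⟩ ⟨m, hmn⟩ (by simpa using him'))
        (hSUF ⟨m, hmn⟩ ⟨m + 1, hm1⟩ (by simp))
      have hne : (Finset.Icc (i + 1) m).Nonempty := Finset.nonempty_Icc.mpr (by omega)
      rw [step, ih i hi hmn him',
        inf'_proof_irrel _ (Finset.insert_nonempty (m + 1) _)
          (Finset.insert_Icc_right_eq_Icc_add_one (by omega : i + 1 ≤ m + 1)).symm LCP,
        Finset.inf'_insert hne, hL]
      rw [min_comm]

/-- For `0 ≤ i < j ≤ n-1`,
`lcp(S_{SUF[i]}, S_{SUF[j]}) = min { LCP[l] : i+1 ≤ l ≤ j }`. -/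
theorem lcp_eq_range_min {α : Type*} [LinearOrder α] {n : ℕ} (hn : 0 < n)
    (S : Fin n → α)
    (hsent : ∀ k : Fin n, (k : ℕ) < n - 1 → S ⟨n - 1, by omega⟩ < S k)
    (SUF : Equiv.Perm (Fin n))
    (hSUF : ∀ i j : Fin n, i < j →
      List.Lex (· < ·) (sfx S ((SUF i : Fin n) : ℕ)) (sfx S ((SUF j : Fin n) : ℕ)))
    (LCP : ℕ → ℕ)
    (hLCP : ∀ l, ∀ _ : 1 ≤ l, ∀ h2 : l < n,
      LCP l = lcpLen (sfx S ((SUF ⟨l - 1, by omega⟩ : Fin n) : ℕ))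
                     (sfx S ((SUF ⟨l, h2⟩ : Fin n) : ℕ)))
    (i j : ℕ) (hij : i < j) (hj : j ≤ n - 1) :
    lcpLen (sfx S ((SUF ⟨i, by omega⟩ : Fin n) : ℕ))
           (sfx S ((SUF ⟨j, by omega⟩ : Fin n) : ℕ)) =
      (Finset.Icc (i + 1) j).inf' (Finset.nonempty_Icc.mpr (by omega)) LCP := by
  exact lcp_aux S SUF hSUF LCP hLCP j i (by omega) (by omega) hij
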